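/- Let r ≥ 1, α = 1 + 1/r, unit vectors k_1,…,k_m, q ∈ R^d, temperature γ > 0, and let τ be the α-entmax threshold so that Σ_i ([⟨k_i,q⟩/(rγ) − τ]_+)^r = 1. Set h = √(2 − 2rγτ) (assuming 2 − 2rγτ > 0). Then for all values v_1,…,v_m ∈ R^d, the α-entmax attention output Σ_i ([⟨k_i,q⟩/(rγ) − τ]_+)^r · v_i equals the Nadaraya-Watson estimate Σ_i K_h(k_i − q) v_i / Σ_j K_h(k_j − q) with the rectified polynomial kernel K_h(u) = [1 − ‖u‖²/h²]_+^r. -/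

import Mathlib

open scoped RealInnerProductSpace

theorem stmt8 (d m : ℕ) (r : ℝ) (hr : 1 ≤ r)
    (k : Fin m → EuclideanSpace ℝ (Fin d)) (q : EuclideanSpace ℝ (Fin d))
    (hk : ∀ i, ‖k i‖ = 1) (hq : ‖q‖ = 1)
    (γ : ℝ) (hγ : 0 < γ)
    (τ : ℝ) (hτ : ∑ i, (max (⟪k i, q⟫ / (r * γ) - τ) 0) ^ r = 1)
    (hpos : 0 < 2 - 2 * r * γ * τ)
    (h : ℝ) (hh : h = Real.sqrt (2 - 2 * r * γ * τ))
    (v : Fin m → EuclideanSpace ℝ (Fin d)) :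
    ∑ i, (max (⟪k i, q⟫ / (r * γ) - τ) 0) ^ r • v i =
      (∑ j, (max (1 - ‖k j - q‖^2 / h^2) 0) ^ r)⁻¹ •
        ∑ i, (max (1 - ‖k i - q‖^2 / h^2) 0) ^ r • v i := by
  have hrγ : 0 < r * γ := mul_pos (lt_of_lt_of_le one_pos hr) hγ
  have hh2 : h ^ 2 = 2 - 2 * r * γ * τ := by
    rw [hh, Real.sq_sqrt hpos.le]
  set c : ℝ := 2 * r * γ / (2 - 2 * r * γ * τ) with hc
  have hcpos : 0 < c := div_pos (by linarith [mul_pos hrγ (zero_lt_two' ℝ)]) hpos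
  have key : ∀ i, (max (1 - ‖k i - q‖^2 / h^2) 0) ^ r
      = c ^ r * (max (⟪k i, q⟫ / (r * γ) - τ) 0) ^ r := by
    intro i
    have hnorm : ‖k i - q‖ ^ 2 = 2 - 2 * ⟪k i, q⟫ := by
      rw [norm_sub_sq_real, hk i, hq]; ring
    have harg : 1 - ‖k i - q‖^2 / h^2 = c * (⟪k i, q⟫ / (r * γ) - τ) := by
      rw [hnorm, hh2, hc]
      have hne : (1 - r * γ * τ) ≠ 0 := (by linarith : (0:ℝ) < 1 - r * γ * τ).ne'
      field_simp
      ring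
    rw [harg, ← Real.mul_rpow hcpos.le (le_max_right _ 0),
      mul_max_of_nonneg _ _ hcpos.le, mul_zero]
  have hcr : (0:ℝ) < c ^ r := Real.rpow_pos_of_pos hcpos r
  have hsum : (∑ j, (max (1 - ‖k j - q‖^2 / h^2) 0) ^ r) = c ^ r := by
    simp only [key, ← Finset.mul_sum, hτ, mul_one]
  rw [hsum]
  have hs2 : ∑ i, (max (1 - ‖k i - q‖^2 / h^2) 0) ^ r • v i
      = (c ^ r) • ∑ i, (max (⟪k i, q⟫ / (r * γ) - τ) 0) ^ r • v i := by
    rw [Finset.smul_sum]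
    exact Finset.sum_congr rfl fun i _ => by rw [key i, mul_smul]
  rw [hs2, smul_smul, inv_mul_cancel₀ hcr.ne', one_smul]
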